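/- For every natural number n ≥ 1, the function x ↦ (2/(1+‖x‖²))ⁿ is integrable on the n-dimensional Euclidean space, and ∫_{ℝⁿ} (2/(1+‖x‖²))ⁿ dx = (n+1) · Vol(B^{n+1}), where Vol(B^{n+1}) is the Lebesgue measure of the open unit ball of the (n+1)-dimensional Euclidean space. -/

import Mathlib

open MeasureTheory Real Set



/-- Closed form for `∫₀^π sin^m`. -/
lemma sin_pow_integral_gamma (m : ℕ) :
    ∫ u in (0:ℝ)..π, Real.sin u ^ m
      = Real.sqrt π * Real.Gamma (((m : ℝ) + 1) / 2) / Real.Gamma ((m : ℝ) / 2 + 1) := by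
  induction m using Nat.twoStepInduction with
  | zero =>
      norm_num
      rw [Real.Gamma_one_half_eq,
        Real.mul_self_sqrt Real.pi_pos.le]
  | one =>
      rw [show ((1:ℕ):ℝ) = 1 by norm_num]
      rw [show ((1:ℝ)+1)/2 = 1 by norm_num, show (1:ℝ)/2 + 1 = 1/2 + 1 by norm_num,
        Real.Gamma_add_one (by norm_num), Real.Gamma_one, Real.Gamma_one_half_eq]
      simp [integral_sin]
      have h := Real.sqrt_pos.mpr Real.pi_pos
      field_simp
      ring
  | more m ih _ =>
      rw [integral_sin_pow]
      simp only [Real.sin_zero, Real.sin_pi, Real.cos_zero, Real.cos_pi]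
      rw [ih]
      have h1 : Real.Gamma (((m:ℝ)+2+1)/2) = ((m+1)/2) * Real.Gamma (((m:ℝ)+1)/2) := by
        rw [show ((m:ℝ)+2+1)/2 = ((m:ℝ)+1)/2 + 1 by ring, Real.Gamma_add_one (by positivity)]
      have h2 : Real.Gamma (((m:ℝ)+2)/2 + 1) = ((m:ℝ)/2+1) * Real.Gamma ((m:ℝ)/2 + 1) := by
        rw [show ((m:ℝ)+2)/2 + 1 = ((m:ℝ)/2 + 1) + 1 by ring, Real.Gamma_add_one (by positivity)]
      push_cast
      rw [h1, h2]
      have g1 : 0 < Real.Gamma (((m:ℝ)+1)/2) := Real.Gamma_pos_of_pos (by positivity)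
      have g2 : 0 < Real.Gamma ((m:ℝ)/2+1) := Real.Gamma_pos_of_pos (by positivity)
      have hm2 : ((m:ℝ) + 2) ≠ 0 := by positivity
      field_simp
      ring


lemma tan_image_Ioo : Real.tan '' Ioo 0 (π/2) = Ioi (0:ℝ) := by
  ext y
  constructor
  · rintro ⟨θ, hθ, rfl⟩
    exact Real.tan_pos_of_pos_of_lt_pi_div_two hθ.1 hθ.2
  · intro hy
    refine ⟨Real.arctan y, ⟨?_, Real.arctan_lt_pi_div_two y⟩, Real.tan_arctan y⟩
    have := Real.arctan_strictMono (show (0:ℝ) < y from hy)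
    rwa [Real.arctan_zero] at this

lemma radial_integral_eq_sin_pow (m : ℕ) :
    ∫ y in Ioi (0:ℝ), y ^ m * (2 / (1 + y ^ 2)) ^ (m + 1)
      = ∫ u in (0:ℝ)..π, Real.sin u ^ m := by
  have hmeas : MeasurableSet (Ioo (0:ℝ) (π/2)) := measurableSet_Ioo
  have hderiv : ∀ θ ∈ Ioo (0:ℝ) (π/2),
      HasDerivWithinAt Real.tan (1 / Real.cos θ ^ 2) (Ioo (0:ℝ) (π/2)) θ := by
    intro θ hθ
    have hc : Real.cos θ ≠ 0 := by
      have : 0 < Real.cos θ := Real.cos_pos_of_mem_Ioo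
        ⟨lt_trans (neg_lt_zero.mpr (by positivity)) hθ.1, hθ.2⟩
      exact this.ne'
    exact (Real.hasDerivAt_tan hc).hasDerivWithinAt
  have hinj : InjOn Real.tan (Ioo (0:ℝ) (π/2)) :=
    Real.injOn_tan.mono (Ioo_subset_Ioo (neg_nonpos.mpr (by positivity)) le_rfl)
  have hsub := integral_image_eq_integral_abs_deriv_smul hmeas hderiv hinj
    (fun y => y ^ m * (2 / (1 + y ^ 2)) ^ (m + 1))
  rw [tan_image_Ioo] at hsub
  rw [hsub]
  have hcong : ∫ θ in Ioo (0:ℝ) (π/2),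
      |1 / Real.cos θ ^ 2| • (Real.tan θ ^ m * (2 / (1 + Real.tan θ ^ 2)) ^ (m + 1))
      = ∫ θ in Ioo (0:ℝ) (π/2), 2 * Real.sin (2*θ) ^ m := by
    refine setIntegral_congr_fun hmeas fun θ hθ => ?_
    have hc : 0 < Real.cos θ := Real.cos_pos_of_mem_Ioo
      ⟨lt_trans (neg_lt_zero.mpr (by positivity)) hθ.1, hθ.2⟩
    have h1 : (1 + Real.tan θ ^ 2)⁻¹ = Real.cos θ ^ 2 := Real.inv_one_add_tan_sq hc.ne'
    have h2 : 2 / (1 + Real.tan θ ^ 2) = 2 * Real.cos θ ^ 2 := by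
      rw [div_eq_mul_inv, h1]
    rw [smul_eq_mul, h2, abs_of_pos (by positivity), Real.sin_two_mul,
      Real.tan_eq_sin_div_cos]
    field_simp
    have key : Real.cos θ ^ (m*2) * (Real.cos θ)⁻¹ ^ m = Real.cos θ ^ m := by
      rw [pow_mul, sq, mul_assoc, ← mul_pow, mul_inv_cancel₀ hc.ne', one_pow, mul_one]
    linear_combination (Real.sin θ ^ m * Real.cos θ ^ 2 * 2 ^ m * 2) * key
  rw [hcong]
  rw [← integral_Ioc_eq_integral_Ioo,
    ← intervalIntegral.integral_of_le (by positivity : (0:ℝ) ≤ π/2)]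
  have := intervalIntegral.integral_comp_mul_left (a := (0:ℝ)) (b := π/2)
    (fun u => Real.sin u ^ m) (two_ne_zero)
  rw [intervalIntegral.integral_const_mul, this]
  rw [show 2 * (π/2) = π by ring]
  rw [smul_eq_mul]; ring


/-- The conformal factor `f x = 2/(1+‖x‖²)` of the inverse stereographic projection
satisfies: `fⁿ` is integrable on `ℝⁿ` and `∫_{ℝⁿ} fⁿ = (n+1)·Vol(B^{n+1}) = ω_n`, the
total surface measure of the unit sphere `Sⁿ ⊂ ℝ^{n+1}`. -/
theorem integral_conformal_factor_pow (n : ℕ) (hn : 1 ≤ n) :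
    Integrable (fun x : EuclideanSpace ℝ (Fin n) => (2 / (1 + ‖x‖ ^ 2)) ^ n) volume ∧
      ∫ x : EuclideanSpace ℝ (Fin n), (2 / (1 + ‖x‖ ^ 2)) ^ n
        = ((n : ℝ) + 1) *
          (volume (Metric.ball (0 : EuclideanSpace ℝ (Fin (n + 1))) 1)).toReal := by
  obtain ⟨m, rfl⟩ : ∃ m, n = m + 1 := ⟨n - 1, (Nat.succ_pred_eq_of_pos hn).symm⟩
  set n := m + 1 with hn_def
  constructor
  · -- Integrability
    have hfin : ((Module.finrank ℝ (EuclideanSpace ℝ (Fin n)) : ℝ)) < (2 * n : ℕ) := by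
      rw [finrank_euclideanSpace_fin]
      exact_mod_cast by omega
    have h1 := integrable_one_add_norm (E := EuclideanSpace ℝ (Fin n)) (μ := volume)
      (r := (2 * n : ℕ)) hfin
    refine (h1.const_mul ((4:ℝ) ^ n)).mono' ?_ ?_
    · refine Continuous.aestronglyMeasurable ?_
      exact (continuous_const.div (by continuity) (fun x => by positivity)).pow n
    · refine Filter.Eventually.of_forall fun x => ?_
      set r := ‖x‖ with hr
      have hr0 : 0 ≤ r := norm_nonneg _
      have hkey : (2 / (1 + r ^ 2)) ^ n ≤ 4 ^ n * ((1 + r) ^ (-(2 * n : ℕ) : ℝ)) := by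
        rw [Real.rpow_neg (by positivity), Real.rpow_natCast]
        rw [div_pow, ← div_eq_mul_inv, div_le_div_iff₀ (by positivity) (by positivity)]
        calc 2 ^ n * (1 + r) ^ (2 * n) = 2 ^ n * ((1 + r) ^ 2) ^ n := by rw [pow_mul]
          _ ≤ 2 ^ n * (2 * (1 + r ^ 2)) ^ n := by
              gcongr
              nlinarith [sq_nonneg (1 - r)]
          _ = 4 ^ n * (1 + r ^ 2) ^ n := by rw [mul_pow, show (4:ℝ) = 2*2 by norm_num, mul_pow]; ring
      calc ‖(2 / (1 + r ^ 2)) ^ n‖ = (2 / (1 + r ^ 2)) ^ n := by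
            rw [Real.norm_eq_abs, abs_of_nonneg (by positivity)]
        _ ≤ 4 ^ n * ((1 + r) ^ (-(2 * n : ℕ) : ℝ)) := hkey
  · -- Integral computation
    have hpolar := integral_fun_norm_addHaar (volume : Measure (EuclideanSpace ℝ (Fin n)))
      (fun y : ℝ => (2 / (1 + y ^ 2)) ^ n)
    simp only [finrank_euclideanSpace_fin, hn_def, Nat.add_sub_cancel, nsmul_eq_mul,
      smul_eq_mul] at hpolar
    rw [hn_def] at hpolar ⊢
    rw [hpolar, radial_integral_eq_sin_pow m, sin_pow_integral_gamma m,
      EuclideanSpace.volume_ball, measureReal_def, EuclideanSpace.volume_ball]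
    simp only [Fintype.card_fin, ENNReal.ofReal_one, one_pow, one_mul]
    rw [ENNReal.toReal_ofReal (by positivity), ENNReal.toReal_ofReal (by positivity)]
    have g1 : 0 < Real.Gamma (((m:ℝ)+1)/2) := Real.Gamma_pos_of_pos (by positivity)
    have g2 : 0 < Real.Gamma ((m:ℝ)/2+1) := Real.Gamma_pos_of_pos (by positivity)
    have e1 : Real.Gamma (((m:ℝ)+1)/2 + 1) = (((m:ℝ)+1)/2) * Real.Gamma (((m:ℝ)+1)/2) :=
      Real.Gamma_add_one (by positivity)
    have e2 : Real.Gamma (((m:ℝ)+2)/2 + 1) = ((m:ℝ)/2+1) * Real.Gamma ((m:ℝ)/2+1) := by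
      rw [show ((m:ℝ)+2)/2 + 1 = ((m:ℝ)/2 + 1) + 1 by ring, Real.Gamma_add_one (by positivity)]
    push_cast
    rw [show ((m:ℝ)+1)/2 + 1 = ((m:ℝ)+1)/2 + 1 from rfl]
    rw [show (((m:ℝ)+1+1)/2 + 1) = (((m:ℝ)+2)/2 + 1) by ring_nf] -- adjust
    rw [e2]
    rw [show (((m:ℝ)+1)/2 + 1) = (((m:ℝ)+1)/2 + 1) from rfl, e1]
    have hsq : 0 < Real.sqrt π := Real.sqrt_pos.mpr Real.pi_pos
    field_simp
    ring
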